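/- Nonnegativity of the elastic coupled co-clustering objective: for every pair of clusterings (C_Y, C_Z), ℓ_T(C_Y, C_Z) ≥ 0. -/

import Mathlib

open scoped BigOperators

noncomputable section

/-- Kullback–Leibler divergence `D(g‖h)` between nonnegative functions on a finite type,
`D(g‖h) = ∑_{t : g t > 0} g t * log (g t / h t)`, with the convention `D(g‖h) = ⊤`
whenever `g t > 0 = h t` for some `t`. -/
def KLdiv {T : Type*} [Fintype T] (g h : T → ℝ) : EReal :=
  if ∃ t, 0 < g t ∧ h t = 0 then ⊤
  else ((∑ t ∈ Finset.univ.filter (fun t => 0 < g t),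
      g t * Real.log (g t / h t) : ℝ) : EReal)

/-- Row marginal `p₁(x) = ∑_w p(x,w)`. -/
def marg₁ {A B : Type*} [Fintype B] (p : A × B → ℝ) (x : A) : ℝ := ∑ w, p (x, w)

/-- Column marginal `p₂(w) = ∑_x p(x,w)`. -/
def marg₂ {A B : Type*} [Fintype A] (p : A × B → ℝ) (w : B) : ℝ := ∑ x, p (x, w)

/-- Co-clustered distribution `p*(x*,w*) = ∑_{x : C_X x = x*} ∑_{w : C_W w = w*} p(x,w)`. -/
def coclust {A B As Bs : Type*} [Fintype A] [Fintype B] [DecidableEq As] [DecidableEq Bs]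
    (p : A × B → ℝ) (CX : A → As) (CW : B → Bs) : As × Bs → ℝ :=
  fun c => ∑ x ∈ Finset.univ.filter (fun x => CX x = c.1),
             ∑ w ∈ Finset.univ.filter (fun w => CW w = c.2), p (x, w)

/-- Approximating distribution
`p̂(x,w) = p*(C_X x, C_W w) · p₁(x) · p₂(w) / (p₁*(C_X x) · p₂*(C_W w))`. -/
def approx {A B As Bs : Type*} [Fintype A] [Fintype B] [Fintype As] [Fintype Bs]
    [DecidableEq As] [DecidableEq Bs]
    (p : A × B → ℝ) (CX : A → As) (CW : B → Bs) : A × B → ℝ :=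
  fun c =>
    coclust p CX CW (CX c.1, CW c.2) * marg₁ p c.1 * marg₂ p c.2 /
      (marg₁ (coclust p CX CW) (CX c.1) * marg₂ (coclust p CX CW) (CW c.2))

/-- Conditional distribution `p(w|x) = p(x,w)/p₁(x)` on `B`. -/
def condRow {A B : Type*} [Fintype B] (p : A × B → ℝ) (x : A) : B → ℝ :=
  fun w => p (x, w) / marg₁ p x

/-- Conditional distribution `p(x|w) = p(x,w)/p₂(w)` on `A`. -/
def condCol {A B : Type*} [Fintype A] (p : A × B → ℝ) (w : B) : A → ℝ :=
  fun x => p (x, w) / marg₂ p w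

/-- Conditional approximating distribution
`p̂(w|x*) = p*(x*, C_W w) · p₂(w) / (p₁*(x*) · p₂*(C_W w))` on `B`. -/
def approxCondRow {A B As Bs : Type*} [Fintype A] [Fintype B] [Fintype As] [Fintype Bs]
    [DecidableEq As] [DecidableEq Bs]
    (p : A × B → ℝ) (CX : A → As) (CW : B → Bs) (xs : As) : B → ℝ :=
  fun w =>
    coclust p CX CW (xs, CW w) * marg₂ p w /
      (marg₁ (coclust p CX CW) xs * marg₂ (coclust p CX CW) (CW w))

/-- Conditional approximating distribution
`p̂(x|w*) = p*(C_X x, w*) · p₁(x) / (p₂*(w*) · p₁*(C_X x))` on `A`. -/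
def approxCondCol {A B As Bs : Type*} [Fintype A] [Fintype B] [Fintype As] [Fintype Bs]
    [DecidableEq As] [DecidableEq Bs]
    (p : A × B → ℝ) (CX : A → As) (CW : B → Bs) (ws : Bs) : A → ℝ :=
  fun x =>
    coclust p CX CW (CX x, ws) * marg₁ p x /
      (marg₂ (coclust p CX CW) ws * marg₁ (coclust p CX CW) (CX x))

/-- Mutual information `I(p) = ∑_{x,w} p(x,w) · log (p(x,w)/(p₁(x)·p₂(w)))`
(summing over all pairs; used for the strictly positive original distribution). -/
def mutualInfoFull {A B : Type*} [Fintype A] [Fintype B] (p : A × B → ℝ) : ℝ :=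
  ∑ x, ∑ w, p (x, w) * Real.log (p (x, w) / (marg₁ p x * marg₂ p w))

/-- Mutual information `I(p*) = ∑_{(x*,w*) : p*(x*,w*) > 0} p*(x*,w*) ·
log (p*(x*,w*)/(p₁*(x*)·p₂*(w*)))` (summing only over positive entries). -/
def mutualInfoPos {A B : Type*} [Fintype A] [Fintype B] (p : A × B → ℝ) : ℝ :=
  ∑ c ∈ Finset.univ.filter (fun c : A × B => 0 < p c),
    p c * Real.log (p c / (marg₁ p c.1 * marg₂ p c.2))

/-- The co-clustering objective `ℓ_A(C_X, C_W) = I(p) − I(p*)`. -/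
def lossA {A B As Bs : Type*} [Fintype A] [Fintype B] [Fintype As] [Fintype Bs]
    [DecidableEq As] [DecidableEq Bs]
    (p : A × B → ℝ) (CX : A → As) (CW : B → Bs) : ℝ :=
  mutualInfoFull p - mutualInfoPos (coclust p CX CW)

/-- The elastic coupled co-clustering objective
`ℓ_T(C_Y, C_Z) = I(q) − I(q*) + α·D(q₁*‖π) + β·D(q₂*‖ρ)`. -/
def lossT {A B As Bs : Type*} [Fintype A] [Fintype B] [Fintype As] [Fintype Bs]
    [DecidableEq As] [DecidableEq Bs]
    (q : A × B → ℝ) (CY : A → As) (CZ : B → Bs) (π : As → ℝ) (ρ : Bs → ℝ)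
    (α β : ℝ) : EReal :=
  ((mutualInfoFull q - mutualInfoPos (coclust q CY CZ) : ℝ) : EReal)
    + (α : EReal) * KLdiv (marg₁ (coclust q CY CZ)) π
    + (β : EReal) * KLdiv (marg₂ (coclust q CY CZ)) ρ

end
open Finset in
theorem log_sum_ineq {ι : Type*} (s : Finset ι) (hs : s.Nonempty) (a b : ι → ℝ)
    (ha : ∀ i ∈ s, 0 < a i) (hb : ∀ i ∈ s, 0 < b i) :
    (∑ i ∈ s, a i) * Real.log ((∑ i ∈ s, a i) / (∑ i ∈ s, b i)) ≤
      ∑ i ∈ s, a i * Real.log (a i / b i) := by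
  set A := ∑ i ∈ s, a i with hA
  set B := ∑ i ∈ s, b i with hB
  have hApos : 0 < A := Finset.sum_pos ha hs
  have hBpos : 0 < B := Finset.sum_pos hb hs
  have key : ∀ i ∈ s, a i * Real.log (A / B) + (a i - b i * (A / B)) ≤
      a i * Real.log (a i / b i) := by
    intro i hi
    have hai := ha i hi
    have hbi := hb i hi
    have hx : 0 < a i * B / (b i * A) := by positivity
    have h1 : 1 - (a i * B / (b i * A))⁻¹ ≤ Real.log (a i * B / (b i * A)) :=
      Real.one_sub_inv_le_log_of_pos hx
    have hlog : Real.log (a i * B / (b i * A)) =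
        Real.log (a i / b i) - Real.log (A / B) := by
      rw [Real.log_div (by positivity) (by positivity), Real.log_mul (ne_of_gt hai) (ne_of_gt hBpos),
        Real.log_mul (ne_of_gt hbi) (ne_of_gt hApos),
        Real.log_div (ne_of_gt hai) (ne_of_gt hbi), Real.log_div (ne_of_gt hApos) (ne_of_gt hBpos)]
      ring
    have hinv : (a i * B / (b i * A))⁻¹ = b i * A / (a i * B) := by
      field_simp
    rw [hlog, hinv] at h1
    have h2 : a i * (1 - b i * A / (a i * B)) ≤
        a i * (Real.log (a i / b i) - Real.log (A / B)) := by
      exact mul_le_mul_of_nonneg_left h1 hai.le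
    have h3 : a i * (1 - b i * A / (a i * B)) = a i - b i * (A / B) := by
      field_simp
    nlinarith [h2, h3]
  calc A * Real.log (A / B) = ∑ i ∈ s, (a i * Real.log (A / B) + (a i - b i * (A / B))) := by
        rw [Finset.sum_add_distrib, ← Finset.sum_mul, Finset.sum_sub_distrib, ← Finset.sum_mul]
        rw [← hA, ← hB]
        field_simp
        ring
    _ ≤ ∑ i ∈ s, a i * Real.log (a i / b i) := Finset.sum_le_sum key

theorem coclust_eq_sum_filter {A B As Bs : Type*} [Fintype A] [Fintype B]
    [DecidableEq As] [DecidableEq Bs] (p : A × B → ℝ) (CX : A → As) (CW : B → Bs)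
    (c : As × Bs) :
    coclust p CX CW c =
      ∑ c' ∈ Finset.univ.filter (fun c' : A × B => CX c'.1 = c.1 ∧ CW c'.2 = c.2), p c' := by
  rw [coclust]
  simp only [Finset.sum_filter]
  rw [Fintype.sum_prod_type]
  refine Finset.sum_congr rfl fun x _ => ?_
  by_cases h : CX x = c.1 <;> simp [h, ite_and]

theorem marg₁_coclust {A B As Bs : Type*} [Fintype A] [Fintype B] [Fintype As] [Fintype Bs]
    [DecidableEq As] [DecidableEq Bs] (p : A × B → ℝ) (CX : A → As) (CW : B → Bs) (xs : As) :
    marg₁ (coclust p CX CW) xs =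
      ∑ x ∈ Finset.univ.filter (fun x => CX x = xs), marg₁ p x := by
  simp only [marg₁, coclust, Finset.sum_filter]
  rw [Finset.sum_comm]
  refine Finset.sum_congr rfl fun x _ => ?_
  by_cases h : CX x = xs <;> simp [h]
  rw [Finset.sum_comm]
  simp [marg₁]

theorem marg₂_coclust {A B As Bs : Type*} [Fintype A] [Fintype B] [Fintype As] [Fintype Bs]
    [DecidableEq As] [DecidableEq Bs] (p : A × B → ℝ) (CX : A → As) (CW : B → Bs) (ws : Bs) :
    marg₂ (coclust p CX CW) ws =
      ∑ w ∈ Finset.univ.filter (fun w => CW w = ws), marg₂ p w := by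
  simp only [marg₂, coclust, Finset.sum_filter]
  -- LHS: ∑ xs : As, ∑ x, if CX x = xs then ∑ w, if CW w = ws then p (x,w) else 0 else 0
  rw [Finset.sum_comm]
  -- = ∑ x, ∑ xs, ...
  have : ∀ x : A, (∑ xs : As, if CX x = xs then ∑ w, if CW w = ws then p (x, w) else 0 else 0)
      = ∑ w, if CW w = ws then p (x, w) else 0 := by
    intro x; simp
  rw [Finset.sum_congr rfl fun x _ => this x]
  rw [Finset.sum_comm]
  refine Finset.sum_congr rfl fun w _ => ?_
  by_cases h : CW w = ws <;> simp [h, marg₂]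

theorem sum_filter_prod_mul {A B As Bs : Type*} [Fintype A] [Fintype B]
    [DecidableEq As] [DecidableEq Bs] (g : A → ℝ) (h : B → ℝ) (CX : A → As) (CW : B → Bs)
    (cs : As × Bs) :
    ∑ c ∈ Finset.univ.filter (fun c : A × B => CX c.1 = cs.1 ∧ CW c.2 = cs.2), g c.1 * h c.2 =
      (∑ x ∈ Finset.univ.filter (fun x => CX x = cs.1), g x) *
        (∑ w ∈ Finset.univ.filter (fun w => CW w = cs.2), h w) := by
  simp only [Finset.sum_filter]
  rw [Fintype.sum_prod_type, Finset.sum_mul_sum]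
  refine Finset.sum_congr rfl fun x _ => Finset.sum_congr rfl fun w _ => ?_
  by_cases h1 : CX x = cs.1 <;> by_cases h2 : CW w = cs.2 <;> simp [h1, h2]

theorem mutualInfoPos_coclust_le {A B As Bs : Type*} [Fintype A] [Fintype B] [Nonempty A]
    [Nonempty B] [Fintype As] [Fintype Bs] [DecidableEq As] [DecidableEq Bs]
    (q : A × B → ℝ) (hq : ∀ c, 0 < q c) (CY : A → As) (CZ : B → Bs) :
    mutualInfoPos (coclust q CY CZ) ≤ mutualInfoFull q := by
  set Q := coclust q CY CZ with hQ
  have hm1 : ∀ x, 0 < marg₁ q x := fun x =>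
    Finset.sum_pos (fun w _ => hq (x, w)) Finset.univ_nonempty
  have hm2 : ∀ w, 0 < marg₂ q w := fun w =>
    Finset.sum_pos (fun x _ => hq (x, w)) Finset.univ_nonempty
  set F : A × B → ℝ := fun c => q c * Real.log (q c / (marg₁ q c.1 * marg₂ q c.2)) with hF
  have hfull : mutualInfoFull q = ∑ cs : As × Bs,
      ∑ c ∈ Finset.univ.filter (fun c : A × B => CY c.1 = cs.1 ∧ CZ c.2 = cs.2), F c := by
    have h0 : mutualInfoFull q = ∑ c : A × B, F c := by
      rw [mutualInfoFull, Fintype.sum_prod_type]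
    rw [h0, ← Finset.sum_fiberwise Finset.univ (fun c : A × B => (CY c.1, CZ c.2)) F]
    refine Finset.sum_congr rfl fun cs _ => Finset.sum_congr ?_ fun _ _ => rfl
    ext c
    simp [Prod.ext_iff]
  rw [hfull, mutualInfoPos, Finset.sum_filter]
  refine Finset.sum_le_sum fun cs _ => ?_
  set s := Finset.univ.filter (fun c : A × B => CY c.1 = cs.1 ∧ CZ c.2 = cs.2) with hs
  have hsum : Q cs = ∑ c ∈ s, q c := coclust_eq_sum_filter q CY CZ cs
  by_cases hpos : 0 < Q cs
  · rw [if_pos hpos]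
    have hsne : s.Nonempty := by
      by_contra hcon
      rw [Finset.not_nonempty_iff_eq_empty] at hcon
      rw [hsum, hcon, Finset.sum_empty] at hpos
      exact lt_irrefl 0 hpos
    have key := log_sum_ineq s hsne (fun c => q c)
      (fun c => marg₁ q c.1 * marg₂ q c.2) (fun c _ => hq c)
      (fun c _ => mul_pos (hm1 c.1) (hm2 c.2))
    have hb : ∑ c ∈ s, marg₁ q c.1 * marg₂ q c.2 =
        marg₁ Q cs.1 * marg₂ Q cs.2 := by
      rw [hs, sum_filter_prod_mul, hQ, marg₁_coclust, marg₂_coclust]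
    rw [← hsum, hb] at key
    exact key
  · rw [if_neg hpos]
    have hse : s = ∅ := by
      by_contra hcon
      exact hpos (hsum ▸ Finset.sum_pos (fun c _ => hq c)
        (Finset.nonempty_iff_ne_empty.mpr hcon))
    rw [hse, Finset.sum_empty]

theorem KLdiv_nonneg_of {T : Type*} [Fintype T] (g h : T → ℝ) (hg : ∀ t, 0 ≤ g t)
    (hgs : ∑ t, g t = 1) (hh : ∀ t, 0 < h t) (hhs : ∑ t, h t = 1) :
    (0 : EReal) ≤ KLdiv g h := by
  rw [KLdiv, if_neg (by push_neg; exact fun t _ => ne_of_gt (hh t))]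
  set s := Finset.univ.filter (fun t => 0 < g t) with hsdef
  have hfe : s = Finset.univ.filter (fun t => g t ≠ 0) := by
    rw [hsdef]
    apply Finset.filter_congr
    intro t _
    simp [lt_iff_le_and_ne, hg t, eq_comm]
  have hA : ∑ t ∈ s, g t = 1 := by
    rw [hfe, Finset.sum_filter_ne_zero, hgs]
  have hsne : s.Nonempty := by
    by_contra hcon
    rw [Finset.not_nonempty_iff_eq_empty] at hcon
    rw [hcon, Finset.sum_empty] at hA
    norm_num at hA
  have hBpos : 0 < ∑ t ∈ s, h t := Finset.sum_pos (fun t _ => hh t) hsne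
  have hBle : ∑ t ∈ s, h t ≤ 1 := by
    rw [← hhs]
    exact Finset.sum_le_sum_of_subset_of_nonneg (Finset.subset_univ s)
      (fun t _ _ => (hh t).le)
  have key := log_sum_ineq s hsne g h
    (fun t ht => (Finset.mem_filter.mp ht).2) (fun t _ => hh t)
  rw [hA, one_mul] at key
  have hlog : 0 ≤ Real.log (1 / ∑ t ∈ s, h t) := by
    rw [one_div, Real.log_inv]
    linarith [Real.log_nonpos hBpos.le hBle]
  have hfin : (0 : ℝ) ≤ ∑ t ∈ s, g t * Real.log (g t / h t) := le_trans hlog key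
  exact_mod_cast hfin


/-- Nonnegativity of the elastic coupled co-clustering objective: for every pair of
clusterings `(C_Y, C_Z)`, `ℓ_T(C_Y, C_Z) ≥ 0`. -/
theorem lossT_nonneg {Y Z Ys Zs : Type*} [Fintype Y] [Fintype Z] [Nonempty Y] [Nonempty Z]
    [Fintype Ys] [Fintype Zs] [DecidableEq Ys] [DecidableEq Zs]
    (q : Y × Z → ℝ) (hqpos : ∀ c, 0 < q c) (hqsum : ∑ c, q c = 1)
    (π : Ys → ℝ) (hπpos : ∀ ys, 0 < π ys) (hπsum : ∑ ys, π ys = 1)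
    (ρ : Zs → ℝ) (hρpos : ∀ zs, 0 < ρ zs) (hρsum : ∑ zs, ρ zs = 1)
    (α β : ℝ) (hα : 0 ≤ α) (hβ : 0 ≤ β)
    (CY : Y → Ys) (CZ : Z → Zs) :
    (0 : EReal) ≤ lossT q CY CZ π ρ α β := by
  have hQnn : ∀ cs : Ys × Zs, 0 ≤ coclust q CY CZ cs := fun cs => by
    rw [coclust_eq_sum_filter]
    exact Finset.sum_nonneg fun c _ => (hqpos c).le
  have hm1nn : ∀ ys, 0 ≤ marg₁ (coclust q CY CZ) ys := fun ys =>
    Finset.sum_nonneg fun zs _ => hQnn (ys, zs)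
  have hm2nn : ∀ zs, 0 ≤ marg₂ (coclust q CY CZ) zs := fun zs =>
    Finset.sum_nonneg fun ys _ => hQnn (ys, zs)
  have hqsum' : ∑ x : Y, marg₁ q x = 1 := by
    rw [← hqsum, Fintype.sum_prod_type]; rfl
  have hqsum'' : ∑ w : Z, marg₂ q w = 1 := by
    rw [← hqsum, Fintype.sum_prod_type_right]; rfl
  have hm1sum : ∑ ys, marg₁ (coclust q CY CZ) ys = 1 := by
    rw [Finset.sum_congr rfl fun ys _ => marg₁_coclust q CY CZ ys,
      Finset.sum_fiberwise Finset.univ CY (fun x => marg₁ q x), hqsum']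
  have hm2sum : ∑ zs, marg₂ (coclust q CY CZ) zs = 1 := by
    rw [Finset.sum_congr rfl fun zs _ => marg₂_coclust q CY CZ zs,
      Finset.sum_fiberwise Finset.univ CZ (fun w => marg₂ q w), hqsum'']
  have h1 : (0 : EReal) ≤
      ((mutualInfoFull q - mutualInfoPos (coclust q CY CZ) : ℝ) : EReal) := by
    have := mutualInfoPos_coclust_le q hqpos CY CZ
    exact_mod_cast sub_nonneg.mpr this
  have h2 : (0 : EReal) ≤ KLdiv (marg₁ (coclust q CY CZ)) π :=
    KLdiv_nonneg_of _ _ hm1nn hm1sum hπpos hπsum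
  have h3 : (0 : EReal) ≤ KLdiv (marg₂ (coclust q CY CZ)) ρ :=
    KLdiv_nonneg_of _ _ hm2nn hm2sum hρpos hρsum
  have hα' : (0 : EReal) ≤ (α : EReal) := by exact_mod_cast hα
  have hβ' : (0 : EReal) ≤ (β : EReal) := by exact_mod_cast hβ
  rw [lossT]
  exact add_nonneg (add_nonneg h1 (mul_nonneg hα' h2)) (mul_nonneg hβ' h3)
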